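/- Let (Ŝ, B̂) be any solution of the dirty-model program, and suppose λ_b/λ_s is not an integer and λ_b/λ_s < r. Then for every row index j there exists k such that (j,k) ∉ Supp(Ŝ) and |b̂_j^(k)| = max_l |b̂_j^(l)|. -/

import Mathlib

open scoped BigOperators Classical

noncomputable section

/-- The objective of the dirty-model program:
`(1/(2n)) Σ_k ‖y^(k) − X^(k)(s^(k) + b^(k))‖₂² + λ_s ‖S‖_{1,1} + λ_b ‖B‖_{1,∞}`. -/
def dirtyObj (n p r : ℕ) (X : Fin r → Matrix (Fin n) (Fin p) ℝ)
    (y : Fin r → Fin n → ℝ) (lamS lamB : ℝ)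
    (S B : Matrix (Fin p) (Fin r) ℝ) : ℝ :=
  (1 / (2 * (n : ℝ))) *
      ∑ k, ∑ i, (y k i - ∑ j, X k i j * (S j k + B j k)) ^ 2
    + lamS * (∑ j, ∑ k, |S j k|)
    + lamB * (∑ j, ⨆ k, |B j k|)

/-- `(Ŝ, B̂)` is a solution (global minimizer) of the dirty-model program. -/
def IsDirtySol (n p r : ℕ) (X : Fin r → Matrix (Fin n) (Fin p) ℝ)
    (y : Fin r → Fin n → ℝ) (lamS lamB : ℝ)
    (Shat Bhat : Matrix (Fin p) (Fin r) ℝ) : Prop :=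
  ∀ S B : Matrix (Fin p) (Fin r) ℝ,
    dirtyObj n p r X y lamS lamB Shat Bhat ≤ dirtyObj n p r X y lamS lamB S B

/-- For any solution `(Ŝ, B̂)` of the dirty-model program, if `λ_b/λ_s`
is not an integer and `λ_b/λ_s < r`, then in every row `j` there is a column `k` with
`ŝ_j^(k) = 0` whose entry of `B̂` attains the maximum magnitude of its row. -/
lemma abs_add_sign_mul {x s ε : ℝ} (hx : x ≠ 0) (hs : s = 1 ∨ s = -1)
    (hε : 0 ≤ ε) (hεx : ε ≤ |x|) : |x + ε * s| = |x| + ε * s * Real.sign x := by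
  rcases hx.lt_or_gt with h | h
  · have hax : |x| = -x := abs_of_neg h
    rw [Real.sign_of_neg h]
    rcases hs with rfl | rfl
    · rw [abs_of_nonpos (by rw [hax] at hεx; linarith), hax]; ring
    · rw [abs_of_nonpos (by nlinarith), hax]; ring
  · have hax : |x| = x := abs_of_pos h
    rw [Real.sign_of_pos h]
    rcases hs with rfl | rfl
    · rw [abs_of_nonneg (by nlinarith), hax]; ring
    · rw [abs_of_nonneg (by rw [hax] at hεx; linarith), hax]; ring

lemma sign_pm {x : ℝ} (hx : x ≠ 0) : Real.sign x = 1 ∨ Real.sign x = -1 := by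
  rcases hx.lt_or_gt with h | h
  · exact Or.inr (Real.sign_of_neg h)
  · exact Or.inl (Real.sign_of_pos h)

lemma neg_sign_pm {x : ℝ} (hx : x ≠ 0) : -Real.sign x = 1 ∨ -Real.sign x = -1 := by
  rcases sign_pm hx with h | h
  · right; rw [h]
  · left; rw [h]; ring

lemma sign_mul_self' {x : ℝ} (hx : x ≠ 0) : Real.sign x * Real.sign x = 1 := by
  rcases sign_pm hx with h | h <;> rw [h] <;> ring

lemma sign_mul_sign {x y : ℝ} (hx : x ≠ 0) (hy : y ≠ 0) :
    Real.sign y * Real.sign x = if 0 < x * y then (1:ℝ) else -1 := by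
  rcases hx.lt_or_gt with h | h <;> rcases hy.lt_or_gt with h' | h'
  · rw [Real.sign_of_neg h, Real.sign_of_neg h', if_pos (by nlinarith)]; ring
  · rw [Real.sign_of_neg h, Real.sign_of_pos h', if_neg (by nlinarith)]; ring
  · rw [Real.sign_of_pos h, Real.sign_of_neg h', if_neg (by nlinarith)]; ring
  · rw [Real.sign_of_pos h, Real.sign_of_pos h', if_pos (by nlinarith)]; ring

lemma mySup_eq {r : ℕ} (f : Fin r → ℝ) (c : ℝ) (h1 : ∀ k, f k ≤ c)
    (k0 : Fin r) (h2 : f k0 = c) : (⨆ k, f k) = c := by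
  haveI : Nonempty (Fin r) := ⟨k0⟩
  exact le_antisymm (ciSup_le h1)
    (h2 ▸ le_ciSup (Set.Finite.bddAbove (Set.finite_range f)) k0)

lemma perturb_key (n p r : ℕ) (X : Fin r → Matrix (Fin n) (Fin p) ℝ)
    (y : Fin r → Fin n → ℝ) (lamS lamB : ℝ)
    (Shat Bhat : Matrix (Fin p) (Fin r) ℝ)
    (hsol : IsDirtySol n p r X y lamS lamB Shat Bhat)
    (j : Fin p) (δ : Fin r → ℝ) :
    lamS * (∑ k, |Shat j k|) + lamB * (⨆ k, |Bhat j k|) ≤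
      lamS * (∑ k, |Shat j k + δ k|) + lamB * (⨆ k, |Bhat j k - δ k|) := by
  classical
  set S' : Matrix (Fin p) (Fin r) ℝ :=
    fun a b => if a = j then Shat j b + δ b else Shat a b with hS'
  set B' : Matrix (Fin p) (Fin r) ℝ :=
    fun a b => if a = j then Bhat j b - δ b else Bhat a b with hB'
  have h := hsol S' B'
  unfold dirtyObj at h
  have hSB : ∀ a b, S' a b + B' a b = Shat a b + Bhat a b := by
    intro a b
    by_cases hab : a = j
    · subst hab; simp [hS', hB']
    · simp [hS', hB', hab]
  simp only [hSB] at h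
  have hs1 : (∑ a, ∑ k, |S' a k|)
      = (∑ a ∈ Finset.univ.erase j, ∑ k, |Shat a k|) + ∑ k, |Shat j k + δ k| := by
    rw [← Finset.sum_erase_add _ _ (Finset.mem_univ j)]
    congr 1
    · exact Finset.sum_congr rfl fun a ha => Finset.sum_congr rfl fun k _ => by
        rw [show S' a k = Shat a k from if_neg (Finset.ne_of_mem_erase ha)]
    · exact Finset.sum_congr rfl fun k _ => by
        rw [show S' j k = Shat j k + δ k from if_pos rfl]
  have hs2 : (∑ a, ∑ k, |Shat a k|)
      = (∑ a ∈ Finset.univ.erase j, ∑ k, |Shat a k|) + ∑ k, |Shat j k| :=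
    (Finset.sum_erase_add _ _ (Finset.mem_univ j)).symm
  have hb1 : (∑ a, ⨆ k, |B' a k|)
      = (∑ a ∈ Finset.univ.erase j, ⨆ k, |Bhat a k|) + ⨆ k, |Bhat j k - δ k| := by
    rw [← Finset.sum_erase_add _ _ (Finset.mem_univ j)]
    congr 1
    · refine Finset.sum_congr rfl fun a ha => ?_
      have : ∀ k, B' a k = Bhat a k := fun k => if_neg (Finset.ne_of_mem_erase ha)
      simp only [this]
    · have : ∀ k, B' j k = Bhat j k - δ k := fun k => if_pos rfl
      simp only [this]
  have hb2 : (∑ a, ⨆ k, |Bhat a k|)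
      = (∑ a ∈ Finset.univ.erase j, ⨆ k, |Bhat a k|) + ⨆ k, |Bhat j k| :=
    (Finset.sum_erase_add _ _ (Finset.mem_univ j)).symm
  rw [hs1, hs2, hb1, hb2] at h
  nlinarith [h]

theorem dirty_model_exists_free_max_entry
    (n p r : ℕ) (hn : 1 ≤ n) (hp : 1 ≤ p) (hr : 1 ≤ r)
    (X : Fin r → Matrix (Fin n) (Fin p) ℝ) (y : Fin r → Fin n → ℝ)
    (lamS lamB : ℝ) (hlamS : 0 < lamS) (hlamB : 0 < lamB)
    (hnotint : ¬ ∃ m : ℤ, lamB / lamS = (m : ℝ))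
    (hlt : lamB / lamS < (r : ℝ))
    (Shat Bhat : Matrix (Fin p) (Fin r) ℝ)
    (hsol : IsDirtySol n p r X y lamS lamB Shat Bhat) :
    ∀ j : Fin p, ∃ k : Fin r, Shat j k = 0 ∧ |Bhat j k| = ⨆ l, |Bhat j l| := by
  intro j
  by_contra hcon
  push_neg at hcon
  haveI : Nonempty (Fin r) := ⟨⟨0, hr⟩⟩
  obtain ⟨k0, hk0⟩ := Finite.exists_max (fun l : Fin r => |Bhat j l|)
  set M := |Bhat j k0| with hMdef
  have hsup : (⨆ l, |Bhat j l|) = M := mySup_eq _ _ hk0 k0 rfl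
  have hSnz : ∀ k, |Bhat j k| = M → Shat j k ≠ 0 := by
    intro k hk h0
    exact hcon k h0 (by rw [hsup, hk])
  have key := perturb_key n p r X y lamS lamB Shat Bhat hsol j
  by_cases hM : M = 0
  · -- M = 0: all Bhat row entries zero, all Shat row entries nonzero
    have hBz : ∀ k, Bhat j k = 0 := fun k =>
      abs_eq_zero.mp (le_antisymm (hM ▸ hk0 k) (abs_nonneg _))
    have hSnz' : ∀ k, Shat j k ≠ 0 := fun k =>
      hSnz k (by rw [hBz k, abs_zero, hM])
    set ε := Finset.univ.inf' Finset.univ_nonempty (fun k : Fin r => |Shat j k|) with hεdef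
    have hεpos : 0 < ε :=
      (Finset.lt_inf'_iff _).mpr fun k _ => abs_pos.mpr (hSnz' k)
    have hεle : ∀ k, ε ≤ |Shat j k| := fun k => Finset.inf'_le _ (Finset.mem_univ k)
    set δ : Fin r → ℝ := fun k => ε * (-Real.sign (Shat j k)) with hδdef
    have h1 : ∀ k, |Shat j k + δ k| = |Shat j k| - ε := by
      intro k
      simp only [hδdef]
      rw [abs_add_sign_mul (hSnz' k) (neg_sign_pm (hSnz' k)) hεpos.le (hεle k)]
      have := sign_mul_self' (hSnz' k)
      ring_nf
      nlinarith [this]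
    have hsum : (∑ k, |Shat j k + δ k|) = (∑ k, |Shat j k|) - r * ε := by
      simp only [h1]
      rw [Finset.sum_sub_distrib, Finset.sum_const, Finset.card_univ, Fintype.card_fin,
        nsmul_eq_mul]
    have hsupδ : (⨆ k, |Bhat j k - δ k|) = ε := by
      refine mySup_eq _ _ (fun k => ?_) k0 ?_
      · rw [hBz k]; simp only [hδdef]
        simp only [zero_sub, abs_neg, abs_mul, abs_of_pos hεpos]
        rcases sign_pm (hSnz' k) with h | h <;> rw [h] <;> norm_num
      · rw [hBz k0]; simp only [hδdef]
        simp only [zero_sub, abs_neg, abs_mul, abs_of_pos hεpos]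
        rcases sign_pm (hSnz' k0) with h | h <;> rw [h] <;> norm_num
    have hkey := key δ
    rw [hsum, hsupδ, hsup, hM] at hkey
    have hlb : lamB < r * lamS := by
      rw [div_lt_iff₀ hlamS] at hlt; linarith
    nlinarith [mul_pos hεpos (sub_pos.mpr hlb)]
  · -- M > 0
    have hMpos : 0 < M := lt_of_le_of_ne (abs_nonneg _) (Ne.symm hM)
    have hBnz : ∀ k, |Bhat j k| = M → Bhat j k ≠ 0 := by
      intro k hk h0; rw [h0, abs_zero] at hk; exact hM hk.symm
    set ε := Finset.univ.inf' Finset.univ_nonempty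
      (fun k : Fin r => if |Bhat j k| = M then min |Shat j k| M else M - |Bhat j k|) with hεdef
    have hεpos : 0 < ε := by
      refine (Finset.lt_inf'_iff _).mpr fun k _ => ?_
      by_cases hk : |Bhat j k| = M
      · rw [if_pos hk]; exact lt_min (abs_pos.mpr (hSnz k hk)) hMpos
      · rw [if_neg hk]; exact sub_pos.mpr (lt_of_le_of_ne (hk0 k) hk)
    have hεA : ∀ k, |Bhat j k| = M → ε ≤ |Shat j k| ∧ ε ≤ M := by
      intro k hk
      have := Finset.inf'_le (b := k)
        (fun k : Fin r => if |Bhat j k| = M then min |Shat j k| M else M - |Bhat j k|)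
        (Finset.mem_univ k)
      rw [if_pos hk] at this
      exact ⟨le_trans this (min_le_left _ _), le_trans this (min_le_right _ _)⟩
    have hεN : ∀ k, |Bhat j k| ≠ M → ε ≤ M - |Bhat j k| := by
      intro k hk
      have := Finset.inf'_le (b := k)
        (fun k : Fin r => if |Bhat j k| = M then min |Shat j k| M else M - |Bhat j k|)
        (Finset.mem_univ k)
      rwa [if_neg hk] at this
    set τ : Fin r → ℝ := fun k => Real.sign (Bhat j k) * Real.sign (Shat j k) with hτdef
    set T : ℝ := ∑ k, if |Bhat j k| = M then τ k else 0 with hTdef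
    -- down move
    set δd : Fin r → ℝ := fun k => if |Bhat j k| = M then ε * Real.sign (Bhat j k) else 0
      with hδddef
    have hsumd : (∑ k, |Shat j k + δd k|) = (∑ k, |Shat j k|) + ε * T := by
      have : ∀ k, |Shat j k + δd k|
          = |Shat j k| + ε * (if |Bhat j k| = M then τ k else 0) := by
        intro k
        simp only [hδddef]
        by_cases hk : |Bhat j k| = M
        · rw [if_pos hk, if_pos hk,
            abs_add_sign_mul (hSnz k hk) (sign_pm (hBnz k hk)) hεpos.le (hεA k hk).1, hτdef]
          ring
        · rw [if_neg hk, if_neg hk]; ring_nf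
      simp only [this]
      rw [Finset.sum_add_distrib, ← Finset.mul_sum]
    have hsupd : (⨆ k, |Bhat j k - δd k|) = M - ε := by
      refine mySup_eq _ _ (fun k => ?_) k0 ?_
      · simp only [hδddef]
        by_cases hk : |Bhat j k| = M
        · rw [if_pos hk, sub_eq_add_neg, ← mul_neg,
            abs_add_sign_mul (hBnz k hk) (neg_sign_pm (hBnz k hk)) hεpos.le
              (hk ▸ (hεA k hk).2), hk]
          have := sign_mul_self' (hBnz k hk); nlinarith
        · rw [if_neg hk, sub_zero]
          linarith [hεN k hk]
      · have hk : |Bhat j k0| = M := rfl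
        simp only [hδddef]
        rw [if_pos hk, sub_eq_add_neg, ← mul_neg,
          abs_add_sign_mul (hBnz k0 hk) (neg_sign_pm (hBnz k0 hk)) hεpos.le
            (hk ▸ (hεA k0 hk).2), hk]
        have := sign_mul_self' (hBnz k0 hk); nlinarith
    have hkeyd := key δd
    rw [hsumd, hsupd, hsup] at hkeyd
    -- up move
    set δu : Fin r → ℝ := fun k => if |Bhat j k| = M then ε * (-Real.sign (Bhat j k)) else 0
      with hδudef
    have hsumu : (∑ k, |Shat j k + δu k|) = (∑ k, |Shat j k|) - ε * T := by
      have : ∀ k, |Shat j k + δu k|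
          = |Shat j k| - ε * (if |Bhat j k| = M then τ k else 0) := by
        intro k
        simp only [hδudef]
        by_cases hk : |Bhat j k| = M
        · rw [if_pos hk, if_pos hk,
            abs_add_sign_mul (hSnz k hk) (neg_sign_pm (hBnz k hk)) hεpos.le (hεA k hk).1,
            hτdef]
          ring
        · rw [if_neg hk, if_neg hk]; ring_nf
      simp only [this]
      rw [Finset.sum_sub_distrib, ← Finset.mul_sum]
    have hsupu : (⨆ k, |Bhat j k - δu k|) = M + ε := by
      refine mySup_eq _ _ (fun k => ?_) k0 ?_
      · simp only [hδudef]
        by_cases hk : |Bhat j k| = M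
        · rw [if_pos hk, sub_eq_add_neg, ← mul_neg, neg_neg,
            abs_add_sign_mul (hBnz k hk) (sign_pm (hBnz k hk)) hεpos.le
              (hk ▸ (hεA k hk).2), hk]
          have := sign_mul_self' (hBnz k hk); nlinarith
        · rw [if_neg hk, sub_zero]
          linarith [hk0 k, hεpos]
      · have hk : |Bhat j k0| = M := rfl
        simp only [hδudef]
        rw [if_pos hk, sub_eq_add_neg, ← mul_neg, neg_neg,
          abs_add_sign_mul (hBnz k0 hk) (sign_pm (hBnz k0 hk)) hεpos.le
            (hk ▸ (hεA k0 hk).2), hk]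
        have := sign_mul_self' (hBnz k0 hk); nlinarith
    have hkeyu := key δu
    rw [hsumu, hsupu, hsup] at hkeyu
    -- combine: lamS * T = lamB
    have heq : lamS * T = lamB := by
      have h1 : ε * (lamS * T) ≤ ε * lamB := by nlinarith
      have h2 : ε * lamB ≤ ε * (lamS * T) := by nlinarith
      exact mul_left_cancel₀ hεpos.ne' (le_antisymm h1 h2)
    -- T is an integer
    refine hnotint ⟨∑ k, if |Bhat j k| = M then (if 0 < Shat j k * Bhat j k then (1:ℤ) else -1)
      else 0, ?_⟩
    have hcast : ((∑ k, if |Bhat j k| = M then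
        (if 0 < Shat j k * Bhat j k then (1:ℤ) else -1) else 0 : ℤ) : ℝ) = T := by
      push_cast
      rw [hTdef]
      refine Finset.sum_congr rfl fun k _ => ?_
      by_cases hk : |Bhat j k| = M
      · rw [if_pos hk, if_pos hk]
        simp only [hτdef]
        exact (sign_mul_sign (hSnz k hk) (hBnz k hk)).symm
      · rw [if_neg hk, if_neg hk]
    rw [hcast, div_eq_iff hlamS.ne']
    linarith [heq]
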